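/- arXiv:2102.01379 — 2 statements merged into one kernel-verified Lean document; each statement's English description precedes it below -/
import Mathlib

section
/- Let α be a positive integer and β a nonnegative integer with β < α, and let {a_m}_{m≥1} be an arbitrary sequence of complex numbers. Then the formal power series identity ∑_{n≥1} A(a,α,β;n)·qⁿ = ( ∏_{j≥1} (1+q^j)/(1−q^j) ) · ∑_{n≥1} a_n·q^{αn−β}/(1−q^{αn−β}) holds. -/
/-- An overpartition of `n`: a pair consisting of a multiset of overlined parts (pairwise
distinct) and a multiset of non-overlined parts, all parts positive, with total sum `n`. -/
structure Overpartition (n : ℕ) where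
  overlined : Multiset ℕ
  nonoverlined : Multiset ℕ
  overlined_nodup : overlined.Nodup
  overlined_pos : ∀ i ∈ overlined, 0 < i
  nonoverlined_pos : ∀ i ∈ nonoverlined, 0 < i
  parts_sum : overlined.sum + nonoverlined.sum = n

/-- There are only finitely many overpartitions of `n`. -/
instance (n : ℕ) : Finite (Overpartition n) := by
  classical
  set big : Multiset ℕ := n • ((Multiset.range (n + 1))) with hbig
  have key : ∀ (m : Multiset ℕ), (∀ i ∈ m, 0 < i) → m.sum ≤ n → m ≤ big := by
    intro m hpos hsum
    rw [Multiset.le_iff_count]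
    intro a
    rw [hbig, Multiset.count_nsmul]
    by_cases ha : a ∈ m
    · have ha1 : 0 < a := hpos a ha
      have hale : a ≤ m.sum := Multiset.le_sum_of_mem ha
      have hcard : m.card ≤ m.sum := by
        have := Multiset.card_nsmul_le_sum (s := m) (a := 1) (fun i hi => hpos i hi)
        simpa using this
      have hcnt : m.count a ≤ m.card := Multiset.count_le_card a m
      have haa : a ∈ Multiset.range (n + 1) := Multiset.mem_range.2 (by omega)
      have h1 : Multiset.count a (Multiset.range (n + 1)) = 1 :=
        Multiset.count_eq_one_of_mem (Multiset.nodup_range _) haa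
      rw [h1]
      omega
    · simp [Multiset.count_eq_zero_of_notMem ha]
  have hinj : Function.Injective (fun o : Overpartition n =>
      ((⟨o.overlined, Multiset.mem_powerset.2
          (key _ o.overlined_pos (by have := o.parts_sum; omega))⟩,
        ⟨o.nonoverlined, Multiset.mem_powerset.2
          (key _ o.nonoverlined_pos (by have := o.parts_sum; omega))⟩) :
        {m // m ∈ big.powerset} × {m // m ∈ big.powerset})) := by
    intro a b h
    cases a; cases b
    simp_all
  exact Finite.of_injective _ hinj

/-- `S k n`: the total number of non-overlined parts equal to `k`, counted with
multiplicity, in all the overpartitions of `n`. -/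
noncomputable def S (k n : ℕ) : ℕ := ∑ᶠ o : Overpartition n, o.nonoverlined.count k

/-- `pbar n`: the number of overpartitions of `n` (`pbar 0 = 1`). -/
noncomputable def pbar (n : ℕ) : ℕ := Nat.card (Overpartition n)

/-- The multiset of all parts (overlined and non-overlined) of an overpartition. -/
def Overpartition.parts {n : ℕ} (o : Overpartition n) : Multiset ℕ :=
  o.overlined + o.nonoverlined

/-- `Mbar k n`: the number of overpartitions of `n` in which the first (i.e. largest) part
larger than `k` appears at least `k + 1` times. -/
noncomputable def Mbar (k n : ℕ) : ℕ :=
  Nat.card {o : Overpartition n // ∃ s ∈ o.parts, k < s ∧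
    (∀ t ∈ o.parts, k < t → t ≤ s) ∧ k + 1 ≤ o.parts.count s}

/-- `A a α β n = ∑_{k ≥ 1} S(αk - β, n) * a k`. -/
noncomputable def A (a : ℕ → ℂ) (α β n : ℕ) : ℂ :=
  ∑ᶠ k ∈ Set.Ici 1, (S (α * k - β) n : ℂ) * a k

/-- `A` extended to integer arguments: terms with negative argument are zero. -/
noncomputable def Az (a : ℕ → ℂ) (α β : ℕ) (m : ℤ) : ℂ :=
  if 0 ≤ m then A a α β m.toNat else 0

/-- `B a α β n = ∑_{d ≥ 1, (αd - β) ∣ n} a d`. -/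
noncomputable def B (a : ℕ → ℂ) (α β n : ℕ) : ℂ :=
  ∑ᶠ d ∈ {d : ℕ | 1 ≤ d ∧ (α * d - β) ∣ n}, a d

/-- The formal power series `∏_{j ≥ 1} (1 + q^j)/(1 - q^j)`.  Since the `j`-th factor is
`1 + (terms of order ≥ j)`, the `n`-th coefficient of the infinite product equals the
`n`-th coefficient of the partial product over `1 ≤ j ≤ n`, which we take as definition. -/
noncomputable def overGF : PowerSeries ℂ :=
  PowerSeries.mk fun n =>
    PowerSeries.coeff n
      (∏ j ∈ Finset.Icc 1 n, (1 + PowerSeries.X ^ j) * (1 - PowerSeries.X ^ j)⁻¹)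

/-- The generalized Lambert series `∑_{m ≥ 1} a m * q^(αm-β)/(1 - q^(αm-β))` as a formal
power series; since the `m`-th summand has order `αm - β ≥ m`, each coefficient of the
infinite sum is the (finitely supported) sum of the corresponding coefficients. -/
noncomputable def lambertGF (a : ℕ → ℂ) (α β : ℕ) : PowerSeries ℂ :=
  PowerSeries.mk fun n =>
    ∑ᶠ m ∈ Set.Ici 1, PowerSeries.coeff n
      (PowerSeries.C (a m) * PowerSeries.X ^ (α * m - β)
        * (1 - PowerSeries.X ^ (α * m - β))⁻¹)


namespace OverAux
open PowerSeries

noncomputable section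

variable {α : Type*}

open Finset

open scoped Classical

open Finset.HasAntidiagonal

universe u
variable {ι : Type u}

/-- A convenience constructor for the power series whose coefficients indicate a subset. -/
def indicatorSeries (α : Type*) [Semiring α] (s : Set ℕ) : PowerSeries α :=
  PowerSeries.mk fun n => if n ∈ s then 1 else 0

theorem coeff_indicator (s : Set ℕ) [Semiring α] (n : ℕ) :
    coeff n (indicatorSeries α s) = if n ∈ s then 1 else 0 :=
  coeff_mk _ _

theorem coeff_indicator_pos (s : Set ℕ) [Semiring α] (n : ℕ) (h : n ∈ s) :
    coeff n (indicatorSeries α s) = 1 := by rw [coeff_indicator, if_pos h]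

theorem coeff_indicator_neg (s : Set ℕ) [Semiring α] (n : ℕ) (h : n ∉ s) :
    coeff n (indicatorSeries α s) = 0 := by rw [coeff_indicator, if_neg h]

theorem constantCoeff_indicator (s : Set ℕ) [Semiring α] :
    constantCoeff (indicatorSeries α s) = if 0 ∈ s then 1 else 0 :=
  rfl

theorem two_series (i : ℕ) [Semiring α] :
    1 + (X : PowerSeries α) ^ i.succ = indicatorSeries α {0, i.succ} := by
  ext n
  simp only [coeff_indicator, coeff_one, coeff_X_pow, Set.mem_insert_iff, Set.mem_singleton_iff,
    map_add]
  cases' n with d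
  · simp [(Nat.succ_ne_zero i).symm]
  · simp [Nat.succ_ne_zero d]

theorem num_series' [Field α] (i : ℕ) :
    (1 - (X : PowerSeries α) ^ (i + 1))⁻¹ = indicatorSeries α {k | i + 1 ∣ k} := by
  rw [PowerSeries.inv_eq_iff_mul_eq_one]
  · ext n
    cases n with
    | zero => simp [mul_sub, zero_pow, constantCoeff_indicator]
    | succ n =>
      simp only [coeff_one, if_false, mul_sub, mul_one, coeff_indicator,
        LinearMap.map_sub, reduceCtorEq]
      simp_rw [coeff_mul, coeff_X_pow, coeff_indicator, @boole_mul _ _ _ _]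
      erw [@sum_ite _ _ _ _ _ (fun _ => Classical.propDecidable _), sum_ite]
      simp_rw [@filter_filter _ _ _ _ _, sum_const_zero, add_zero, sum_const, nsmul_eq_mul, mul_one,
        sub_eq_iff_eq_add, zero_add]
      symm
      split_ifs with h
      · suffices #{a ∈ antidiagonal (n + 1) | i + 1 ∣ a.fst ∧ a.snd = i + 1} = 1 by
          simp only [Set.mem_setOf_eq]; convert congr_arg ((↑) : ℕ → α) this; norm_cast
        rw [card_eq_one]
        cases' h with p hp
        refine ⟨((i + 1) * (p - 1), i + 1), ?_⟩
        ext ⟨a₁, a₂⟩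
        simp only [mem_filter, Prod.mk.injEq, HasAntidiagonal.mem_antidiagonal, mem_singleton]
        constructor
        · rintro ⟨a_left, ⟨a, rfl⟩, rfl⟩
          refine ⟨?_, rfl⟩
          rw [Nat.mul_sub_left_distrib, ← hp, ← a_left, mul_one, Nat.add_sub_cancel]
        · rintro ⟨rfl, rfl⟩
          match p with
          | 0 => rw [mul_zero] at hp; cases hp
          | p + 1 => rw [hp]; simp [mul_add]
      · suffices #{a ∈ antidiagonal (n + 1) | i + 1 ∣ a.fst ∧ a.snd = i + 1} = 0 by
          simp only [Set.mem_setOf_eq]; convert congr_arg ((↑) : ℕ → α) this; norm_cast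
        rw [card_eq_zero]
        apply eq_empty_of_forall_notMem
        simp only [Prod.forall, mem_filter, not_and, HasAntidiagonal.mem_antidiagonal]
        rintro _ h₁ h₂ ⟨a, rfl⟩ rfl
        apply h
        simp [← h₂]
  · simp [zero_pow]

def partialDistinctGF (m : ℕ) [CommSemiring α] :=
  ∏ i ∈ range m, (1 + (X : PowerSeries α) ^ (i + 1))

def partialAllGF (m : ℕ) [Field α] :=
  ∏ i ∈ range m, (1 - (X : PowerSeries α) ^ (i + 1))⁻¹

-- The main workhorse of the partition theorem proof.
theorem partialGF_prop (α : Type*) [CommSemiring α] (n : ℕ) (s : Finset ℕ) (hs : ∀ i ∈ s, 0 < i)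
    (c : ℕ → Set ℕ) (hc : ∀ i, i ∉ s → 0 ∈ c i) :
    #{p : n.Partition | (∀ j, p.parts.count j ∈ c j) ∧ ∀ j ∈ p.parts, j ∈ s} =
      coeff n (∏ i ∈ s, indicatorSeries α ((· * i) '' c i)) := by
  simp_rw [coeff_prod, coeff_indicator, prod_boole, sum_boole]
  apply congr_arg
  simp only [mem_univ, forall_true_left, not_and, not_forall, exists_prop,
    Set.mem_image, not_exists]
  set φ : (a : Nat.Partition n) →
    a ∈ filter (fun p ↦ (∀ (j : ℕ), Multiset.count j p.parts ∈ c j) ∧ ∀ j ∈ p.parts, j ∈ s) univ →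
    ℕ →₀ ℕ := fun p _ => {
      toFun := fun i => Multiset.count i p.parts • i
      support := Finset.filter (fun i => i ≠ 0) p.parts.toFinset
      mem_support_toFun := fun a => by
        simp only [smul_eq_mul, ne_eq, mul_eq_zero, Multiset.count_eq_zero]
        rw [not_or, not_not]
        simp only [Multiset.mem_toFinset, not_not, mem_filter] }
  refine Finset.card_bij φ ?_ ?_ ?_
  · intro a ha
    simp only [φ, not_forall, not_exists, not_and, exists_prop, mem_filter]
    rw [mem_finsuppAntidiag]
    dsimp only [ne_eq, smul_eq_mul, id_eq, eq_mpr_eq_cast, le_eq_subset, Finsupp.coe_mk]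
    simp only [mem_univ, forall_true_left, not_and, not_forall, exists_prop,
      mem_filter, true_and] at ha
    refine ⟨⟨?_, fun i ↦ ?_⟩, fun i _ ↦ ⟨a.parts.count i, ha.1 i, rfl⟩⟩
    · conv_rhs => simp [← a.parts_sum]
      rw [sum_multiset_count_of_subset _ s]
      · simp only [smul_eq_mul]
      · intro i
        simp only [Multiset.mem_toFinset, not_not, mem_filter]
        apply ha.2
    · simp only [ne_eq, Multiset.mem_toFinset, not_not, mem_filter, and_imp]
      exact fun hi _ ↦ ha.2 i hi
  · intro p₁ hp₁ p₂ hp₂ h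
    apply Nat.Partition.ext
    simp only [true_and, mem_univ, mem_filter] at hp₁ hp₂
    ext i
    simp only [φ, ne_eq, Multiset.mem_toFinset, not_not, smul_eq_mul, Finsupp.mk.injEq] at h
    by_cases hi : i = 0
    · rw [hi]
      rw [Multiset.count_eq_zero_of_notMem]
      · rw [Multiset.count_eq_zero_of_notMem]
        intro a; exact Nat.lt_irrefl 0 (hs 0 (hp₂.2 0 a))
      intro a; exact Nat.lt_irrefl 0 (hs 0 (hp₁.2 0 a))
    · rw [← mul_left_inj' hi]
      rw [funext_iff] at h
      exact h.2 i
  · simp only [φ, mem_filter, mem_finsuppAntidiag, mem_univ, exists_prop, true_and, and_assoc]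
    rintro f ⟨hf, hf₃, hf₄⟩
    have hf' : f ∈ finsuppAntidiag s n := mem_finsuppAntidiag.mpr ⟨hf, hf₃⟩
    simp only [mem_finsuppAntidiag] at hf'
    refine ⟨⟨∑ i ∈ s, Multiset.replicate (f i / i) i, ?_, ?_⟩, ?_, ?_, ?_⟩
    · intro i hi
      simp only [exists_prop, Multiset.mem_sum, mem_map, Function.Embedding.coeFn_mk] at hi
      rcases hi with ⟨t, ht, z⟩
      apply hs
      rwa [Multiset.eq_of_mem_replicate z]
    · simp_rw [Multiset.sum_sum, Multiset.sum_replicate, Nat.nsmul_eq_mul]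
      rw [← hf'.1]
      refine sum_congr rfl fun i hi => Nat.div_mul_cancel ?_
      rcases hf₄ i hi with ⟨w, _, hw₂⟩
      rw [← hw₂]
      exact dvd_mul_left _ _
    · intro i
      simp_rw [Multiset.count_sum', Multiset.count_replicate, sum_ite_eq']
      split_ifs with h
      · rcases hf₄ i h with ⟨w, hw₁, hw₂⟩
        rwa [← hw₂, Nat.mul_div_cancel _ (hs i h)]
      · exact hc _ h
    · intro i hi
      rw [Multiset.mem_sum] at hi
      rcases hi with ⟨j, hj₁, hj₂⟩
      rwa [Multiset.eq_of_mem_replicate hj₂]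
    · ext i
      simp_rw [Multiset.count_sum', Multiset.count_replicate, sum_ite_eq']
      simp only [ne_eq, Multiset.mem_toFinset, not_not, smul_eq_mul, ite_mul,
        zero_mul, Finsupp.coe_mk]
      split_ifs with h
      · apply Nat.div_mul_cancel
        rcases hf₄ i h with ⟨w, _, hw₂⟩
        apply Dvd.intro_left _ hw₂
      · apply symm
        rw [← Finsupp.notMem_support_iff]
        exact notMem_mono hf'.2 h

theorem partialDistinctGF_prop [CommSemiring α] (n m : ℕ) :
    #{p : n.Partition |
        p.parts.Nodup ∧ ∀ j ∈ p.parts, j ∈ (range m).map ⟨Nat.succ, Nat.succ_injective⟩} =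
      coeff n (partialDistinctGF m : PowerSeries α) := by
  rw [partialDistinctGF]
  convert partialGF_prop α n
    ((range m).map ⟨Nat.succ, Nat.succ_injective⟩) _ (fun _ => {0, 1}) (fun _ _ => Or.inl rfl)
    using 2
  · congr! with p
    rw [Multiset.nodup_iff_count_le_one]
    congr! 1 with i
    rcases Multiset.count i p.parts with (_ | _ | ms) <;> simp
  · simp_rw [Finset.prod_map, two_series]
    congr with i
    simp [Set.image_pair]
  · simp only [mem_map, Function.Embedding.coeFn_mk]
    rintro i ⟨_, _, rfl⟩
    apply Nat.succ_pos

theorem distinctGF_prop [CommSemiring α] (n m : ℕ) (h : n < m + 1) :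
    #(Nat.Partition.distincts n) = coeff n (partialDistinctGF m : PowerSeries α) := by
  rw [← partialDistinctGF_prop, Nat.Partition.distincts]
  congr with p
  apply (and_iff_left _).symm
  intro i hi
  have : i ≤ n := by
    simpa [p.parts_sum] using Multiset.single_le_sum (fun _ _ => Nat.zero_le _) _ hi
  simp only [exists_prop, mem_range, Function.Embedding.coeFn_mk, mem_map]
  refine ⟨i - 1, ?_, Nat.succ_pred_eq_of_pos (p.parts_pos hi)⟩
  rw [tsub_lt_iff_right (Nat.one_le_iff_ne_zero.mpr (p.parts_pos hi).ne')]
  exact lt_of_le_of_lt this h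

theorem partialAllGF_prop' [Field α] (n m : ℕ) :
    #{p : n.Partition | ∀ j ∈ p.parts, j ∈ (range m).map ⟨Nat.succ, Nat.succ_injective⟩} =
      coeff n (partialAllGF m : PowerSeries α) := by
  rw [partialAllGF]
  convert partialGF_prop α n
    ((range m).map ⟨Nat.succ, Nat.succ_injective⟩) _ (fun _ => Set.univ) (fun _ _ => trivial)
    using 2
  · congr
    simp only [true_and, forall_const, Set.mem_univ]
  · rw [Finset.prod_map]
    simp_rw [num_series']
    congr! 2 with x
    ext k
    constructor
    · rintro ⟨p, rfl⟩
      refine ⟨p, ⟨⟩, ?_⟩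
      apply mul_comm
    · rintro ⟨a_w, -, rfl⟩
      apply Dvd.intro_left a_w rfl
  · intro i
    rw [mem_map]
    rintro ⟨a, -, rfl⟩
    exact Nat.succ_pos _

theorem allGF_prop [Field α] (n m : ℕ) (h : n ≤ m) :
    (Fintype.card (Nat.Partition n) : α) = coeff n (partialAllGF m : PowerSeries α) := by
  rw [← partialAllGF_prop' n m]
  norm_cast
  rw [Fintype.card, eq_comm]
  rw [Finset.filter_true_of_mem]
  intro p _
  intro j hj
  have hjn : j ≤ n := by
    simpa [p.parts_sum] using Multiset.single_le_sum (fun _ _ => Nat.zero_le _) _ hj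
  simp only [mem_map, mem_range, Function.Embedding.coeFn_mk]
  refine ⟨j - 1, ?_, Nat.succ_pred_eq_of_pos (p.parts_pos hj)⟩
  have := p.parts_pos hj
  omega

end
end OverAux
namespace OverAux
open Finset PowerSeries
open scoped Classical

lemma Overpartition.ext' {n : ℕ} {o₁ o₂ : Overpartition n}
    (h1 : o₁.overlined = o₂.overlined) (h2 : o₁.nonoverlined = o₂.nonoverlined) : o₁ = o₂ := by
  cases o₁; cases o₂; simp_all

noncomputable instance (n : ℕ) : Fintype (Overpartition n) := Fintype.ofFinite _

lemma pbar_eq_sum (n : ℕ) :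
    pbar n = ∑ ij ∈ antidiagonal n,
      (Nat.Partition.distincts ij.1).card * Fintype.card (Nat.Partition ij.2) := by
  have hmap : ∀ o ∈ (univ : Finset (Overpartition n)),
      (o.overlined.sum, o.nonoverlined.sum) ∈ antidiagonal n := by
    intro o _; rw [Finset.HasAntidiagonal.mem_antidiagonal]; exact o.parts_sum
  rw [pbar, Nat.card_eq_fintype_card, ← Finset.card_univ,
    Finset.card_eq_sum_card_fiberwise hmap]
  refine Finset.sum_congr rfl fun ij hij => ?_
  obtain ⟨i, j⟩ := ij
  rw [Finset.HasAntidiagonal.mem_antidiagonal] at hij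
  have e : {o : Overpartition n // (o.overlined.sum, o.nonoverlined.sum) = (i, j)} ≃
      {p : Nat.Partition i // p.parts.Nodup} × Nat.Partition j :=
    { toFun := fun o =>
        (⟨⟨o.1.overlined, fun hi => o.1.overlined_pos _ hi, (Prod.ext_iff.mp o.2).1⟩,
            o.1.overlined_nodup⟩,
          ⟨o.1.nonoverlined, fun hi => o.1.nonoverlined_pos _ hi, (Prod.ext_iff.mp o.2).2⟩)
      invFun := fun pq =>
        ⟨⟨pq.1.1.parts, pq.2.parts, pq.1.2, fun t ht => pq.1.1.parts_pos ht,
          fun t ht => pq.2.parts_pos ht, by rw [pq.1.1.parts_sum, pq.2.parts_sum, hij]⟩,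
          by rw [Prod.mk.injEq]; exact ⟨pq.1.1.parts_sum, pq.2.parts_sum⟩⟩
      left_inv := fun o => Subtype.ext (Overpartition.ext' rfl rfl)
      right_inv := fun pq => by
        refine Prod.ext ?_ ?_
        · exact Subtype.ext (Nat.Partition.ext rfl)
        · exact Nat.Partition.ext rfl }
  rw [← Fintype.card_subtype, Fintype.card_congr e, Fintype.card_prod, Fintype.card_subtype,
    Nat.Partition.distincts]

lemma coeff_overGF (n : ℕ) : PowerSeries.coeff n overGF = (pbar n : ℂ) := by
  rw [overGF, coeff_mk]
  have hIcc : Finset.Icc 1 n = (range n).map ⟨Nat.succ, Nat.succ_injective⟩ := by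
    ext x
    simp only [Finset.mem_Icc, Finset.mem_map, Finset.mem_range, Function.Embedding.coeFn_mk]
    constructor
    · rintro ⟨h1, h2⟩; exact ⟨x - 1, by omega, by omega⟩
    · rintro ⟨a, ha, rfl⟩; omega
  have hprod : (∏ j ∈ Finset.Icc 1 n, ((1 + (X : PowerSeries ℂ) ^ j) * (1 - X ^ j)⁻¹))
      = partialDistinctGF n * partialAllGF n := by
    rw [Finset.prod_mul_distrib, partialDistinctGF, partialAllGF, hIcc, Finset.prod_map,
      Finset.prod_map]
    rfl
  rw [hprod, coeff_mul, pbar_eq_sum]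
  push_cast
  refine Finset.sum_congr rfl fun ij hij => ?_
  rw [Finset.HasAntidiagonal.mem_antidiagonal] at hij
  rw [← distinctGF_prop ij.1 n (by omega), ← allGF_prop ij.2 n (by omega)]

end OverAux
namespace OverAux
open Finset PowerSeries
open scoped Classical

lemma multiset_sum_le_of_le {s t : Multiset ℕ} (h : s ≤ t) : s.sum ≤ t.sum := by
  obtain ⟨u, rfl⟩ := Multiset.le_iff_exists_add.mp h
  simp

lemma count_le_div {n d : ℕ} (o : Overpartition n) (hd : 1 ≤ d) :
    o.nonoverlined.count d ≤ n / d := by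
  rw [Nat.le_div_iff_mul_le hd]
  have h1 : Multiset.replicate (o.nonoverlined.count d) d ≤ o.nonoverlined :=
    Multiset.le_count_iff_replicate_le.mp le_rfl
  have h2 := multiset_sum_le_of_le h1
  rw [Multiset.sum_replicate, smul_eq_mul] at h2
  have h3 := o.parts_sum
  omega

noncomputable def addCopies {n d t : ℕ} (hd : 1 ≤ d) (hdt : t * d ≤ n) :
    Overpartition (n - t * d) ≃ {o : Overpartition n // t ≤ o.nonoverlined.count d} where
  toFun o := ⟨{ overlined := o.overlined
                nonoverlined := o.nonoverlined + Multiset.replicate t d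
                overlined_nodup := o.overlined_nodup
                overlined_pos := o.overlined_pos
                nonoverlined_pos := by
                  intro i hi
                  rcases Multiset.mem_add.mp hi with h | h
                  · exact o.nonoverlined_pos i h
                  · rw [Multiset.eq_of_mem_replicate h]; exact hd
                parts_sum := by
                  have h3 := o.parts_sum
                  rw [Multiset.sum_add, Multiset.sum_replicate, smul_eq_mul]
                  omega },
    by simp [Multiset.count_add, Multiset.count_replicate]⟩
  invFun o := { overlined := o.1.overlined
                nonoverlined := o.1.nonoverlined - Multiset.replicate t d
                overlined_nodup := o.1.overlined_nodup
                overlined_pos := o.1.overlined_pos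
                nonoverlined_pos := fun i hi =>
                  o.1.nonoverlined_pos i (Multiset.mem_of_le tsub_le_self hi)
                parts_sum := by
                  have hrep : Multiset.replicate t d ≤ o.1.nonoverlined :=
                    Multiset.le_count_iff_replicate_le.mp o.2
                  have h4 : (o.1.nonoverlined - Multiset.replicate t d) + Multiset.replicate t d
                      = o.1.nonoverlined := tsub_add_cancel_of_le hrep
                  have h5 := congrArg Multiset.sum h4
                  rw [Multiset.sum_add, Multiset.sum_replicate, smul_eq_mul] at h5
                  have h3 := o.1.parts_sum
                  omega }
  left_inv o := by
    refine Overpartition.ext' ?_ ?_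
    · rfl
    · dsimp only
      simp only [add_tsub_cancel_right]
  right_inv o := by
    apply Subtype.ext
    refine Overpartition.ext' ?_ ?_
    · rfl
    · dsimp only
      exact tsub_add_cancel_of_le (Multiset.le_count_iff_replicate_le.mp o.2)

lemma card_count_ge (n d t : ℕ) (hd : 1 ≤ d) (ht2 : t * d ≤ n) :
    #(filter (fun o : Overpartition n => t ≤ o.nonoverlined.count d) univ) = pbar (n - t * d) := by
  rw [← Fintype.card_subtype, pbar, Nat.card_eq_fintype_card]
  exact (Fintype.card_congr (addCopies hd ht2)).symm

lemma S_eq (d n : ℕ) (hd : 1 ≤ d) :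
    S d n = ∑ t ∈ Finset.Icc 1 (n / d), pbar (n - t * d) := by
  rw [S, finsum_eq_sum_of_fintype]
  have key : ∀ o : Overpartition n, o.nonoverlined.count d
      = ∑ t ∈ Finset.Icc 1 (n / d), if t ≤ o.nonoverlined.count d then 1 else 0 := by
    intro o
    have hc := count_le_div o hd
    rw [← Finset.card_filter]
    have : filter (fun t => t ≤ o.nonoverlined.count d) (Finset.Icc 1 (n / d))
        = Finset.Icc 1 (o.nonoverlined.count d) := by
      ext t
      simp only [Finset.mem_filter, Finset.mem_Icc]
      omega
    rw [this, Nat.card_Icc]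
    omega
  have hkey : ∑ o : Overpartition n, o.nonoverlined.count d
      = ∑ o : Overpartition n, ∑ t ∈ Finset.Icc 1 (n / d),
          if t ≤ o.nonoverlined.count d then 1 else 0 :=
    Finset.sum_congr rfl fun o _ => key o
  rw [hkey]
  rw [Finset.sum_comm]
  refine Finset.sum_congr rfl fun t ht => ?_
  rw [Finset.mem_Icc] at ht
  rw [← Finset.card_filter]
  exact card_count_ge n d t hd ((Nat.le_div_iff_mul_le hd).mp ht.2)

lemma S_ne_zero {d n : ℕ} (hd : 1 ≤ d) (h : S d n ≠ 0) : d ≤ n := by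
  by_contra hn
  apply h
  rw [S_eq d n hd]
  have : n / d = 0 := Nat.div_eq_of_lt (by omega)
  rw [this]
  simp

lemma coeff_term (c : ℂ) {d : ℕ} (hd : 1 ≤ d) (j : ℕ) :
    PowerSeries.coeff j (PowerSeries.C c * X ^ d * (1 - X ^ d)⁻¹)
      = if d ∣ j ∧ j ≠ 0 then c else 0 := by
  obtain ⟨e, rfl⟩ : ∃ e, d = e + 1 := ⟨d - 1, by omega⟩
  rw [num_series', mul_assoc, coeff_C_mul, coeff_X_pow_mul']
  simp only [coeff_indicator, Set.mem_setOf_eq]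
  by_cases h1 : e + 1 ≤ j
  · rw [if_pos h1]
    by_cases h2 : (e + 1) ∣ (j - (e + 1))
    · rw [if_pos h2, mul_one, if_pos]
      refine ⟨?_, by omega⟩
      have h3 : j - (e + 1) + (e + 1) = j := by omega
      exact h3 ▸ Nat.dvd_add h2 dvd_rfl
    · rw [if_neg h2, mul_zero, if_neg]
      rintro ⟨hdvd, -⟩
      exact h2 (Nat.dvd_sub hdvd dvd_rfl)
  · rw [if_neg h1, mul_zero, if_neg]
    rintro ⟨hdvd, hj0⟩
    exact h1 (Nat.le_of_dvd (by omega) hdvd)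

lemma inner_eq (d n : ℕ) (hd : 1 ≤ d) (c : ℂ) :
    ∑ ij ∈ antidiagonal n, (pbar ij.1 : ℂ) * (if d ∣ ij.2 ∧ ij.2 ≠ 0 then c else 0)
      = (S d n : ℂ) * c := by
  set F : ℕ → ℂ := fun j => (pbar (n - j) : ℂ) * (if d ∣ j ∧ j ≠ 0 then c else 0) with hF
  have step1 : ∑ ij ∈ antidiagonal n, (pbar ij.1 : ℂ) * (if d ∣ ij.2 ∧ ij.2 ≠ 0 then c else 0)
      = ∑ k ∈ range (n + 1), F (n - k) := by
    rw [Finset.Nat.sum_antidiagonal_eq_sum_range_succ_mk]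
    refine Finset.sum_congr rfl fun k hk => ?_
    rw [Finset.mem_range] at hk
    rw [hF]
    simp only []
    rw [Nat.sub_sub_self (by omega)]
  rw [step1]
  have step2 : ∑ k ∈ range (n + 1), F (n - k) = ∑ j ∈ range (n + 1), F j := by
    have := Finset.sum_range_reflect F (n + 1)
    simpa using this
  rw [step2]
  have step3 : ∑ j ∈ range (n + 1), F j
      = ∑ j ∈ (range (n + 1)).filter (fun j => d ∣ j ∧ j ≠ 0), (pbar (n - j) : ℂ) * c := by
    rw [Finset.sum_filter]
    refine Finset.sum_congr rfl fun j _ => ?_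
    rw [hF]
    simp only [mul_ite, mul_zero]
  rw [step3]
  have step4 : ∑ j ∈ (range (n + 1)).filter (fun j => d ∣ j ∧ j ≠ 0), (pbar (n - j) : ℂ) * c
      = ∑ t ∈ Finset.Icc 1 (n / d), (pbar (n - t * d) : ℂ) * c := by
    refine Finset.sum_bij' (fun j _ => j / d) (fun t _ => t * d) ?_ ?_ ?_ ?_ ?_
    · intro j hj
      simp only [Finset.mem_filter, Finset.mem_range] at hj
      obtain ⟨hj1, hdvd, hj0⟩ := hj
      rw [Finset.mem_Icc]
      constructor
      · have : d ≤ j := Nat.le_of_dvd (by omega) hdvd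
        exact Nat.one_le_div_iff hd |>.mpr this
      · exact Nat.div_le_div_right (by omega)
    · intro t ht
      rw [Finset.mem_Icc] at ht
      simp only [Finset.mem_filter, Finset.mem_range]
      have htd : t * d ≤ n := (Nat.le_div_iff_mul_le hd).mp ht.2
      exact ⟨by omega, Dvd.intro_left t rfl, Nat.mul_ne_zero (by omega) (by omega)⟩
    · intro j hj
      simp only [Finset.mem_filter, Finset.mem_range] at hj
      exact Nat.div_mul_cancel hj.2.1
    · intro t ht
      show t * d / d = t
      rw [Nat.mul_div_cancel _ (by omega : 0 < d)]
    · intro j hj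
      simp only [Finset.mem_filter, Finset.mem_range] at hj
      rw [Nat.div_mul_cancel hj.2.1]
  rw [step4, S_eq d n hd]
  push_cast
  rw [Finset.sum_mul]

end OverAux
theorem stmt4 (α β : ℕ) (hα : 0 < α) (hβ : β < α) (a : ℕ → ℂ) :
    (PowerSeries.mk fun n => if 1 ≤ n then A a α β n else 0)
      = overGF * lambertGF a α β := by
  classical
  open Finset PowerSeries OverAux in
  ext n
  rw [PowerSeries.coeff_mk]
  have hd1 : ∀ k, 1 ≤ k → 1 ≤ α * k - β := by
    intro k hk
    have h1 : α ≤ α * k := Nat.le_mul_of_pos_right α hk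
    omega
  have hdk : ∀ k, 1 ≤ k → k ≤ α * k - β := by
    intro k hk
    obtain ⟨k', rfl⟩ : ∃ k', k = k' + 1 := ⟨k - 1, by omega⟩
    have h1 : k' ≤ α * k' := Nat.le_mul_of_pos_left k' hα
    have h2 : α * (k' + 1) = α * k' + α := by ring
    omega
  -- RHS transformation
  rw [PowerSeries.coeff_mul]
  have hR : ∀ ij ∈ antidiagonal n,
      (PowerSeries.coeff ij.1) overGF * (PowerSeries.coeff ij.2) (lambertGF a α β)
      = ∑ m ∈ Finset.Icc 1 n,
          (pbar ij.1 : ℂ) * (if (α * m - β) ∣ ij.2 ∧ ij.2 ≠ 0 then a m else 0) := by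
    intro ij hij
    rw [Finset.HasAntidiagonal.mem_antidiagonal] at hij
    rw [OverAux.coeff_overGF, lambertGF, PowerSeries.coeff_mk]
    rw [← Finset.mul_sum]
    congr 1
    have hsupp : Set.Ici 1 ∩ Function.support (fun m => PowerSeries.coeff ij.2
        (PowerSeries.C (a m) * PowerSeries.X ^ (α * m - β)
          * (1 - PowerSeries.X ^ (α * m - β))⁻¹)) ⊆ ↑(Finset.Icc 1 n) := by
      rintro m ⟨hm1, hm2⟩
      simp only [Set.mem_Ici] at hm1
      simp only [Function.mem_support] at hm2
      rw [OverAux.coeff_term (a m) (hd1 m hm1) ij.2] at hm2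
      have hcond : (α * m - β) ∣ ij.2 ∧ ij.2 ≠ 0 := by
        by_contra h
        rw [if_neg h] at hm2
        exact hm2 rfl
      have hle : α * m - β ≤ ij.2 := Nat.le_of_dvd (by omega) hcond.1
      have := hdk m hm1
      simp only [Finset.coe_Icc, Set.mem_Icc]
      omega
    rw [finsum_mem_eq_sum_of_subset _ hsupp (by intro x hx; simp at hx ⊢; omega)]
    refine Finset.sum_congr rfl fun m hm => ?_
    rw [Finset.mem_Icc] at hm
    exact OverAux.coeff_term (a m) (hd1 m hm.1) ij.2
  rw [Finset.sum_congr rfl hR, Finset.sum_comm]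
  have hinner : ∀ m ∈ Finset.Icc 1 n,
      (∑ ij ∈ antidiagonal n, (pbar ij.1 : ℂ)
          * (if (α * m - β) ∣ ij.2 ∧ ij.2 ≠ 0 then a m else 0))
        = (S (α * m - β) n : ℂ) * a m := by
    intro m hm
    rw [Finset.mem_Icc] at hm
    exact OverAux.inner_eq (α * m - β) n (hd1 m hm.1) (a m)
  rw [Finset.sum_congr rfl hinner]
  -- LHS
  by_cases hn : 1 ≤ n
  · rw [if_pos hn, A]
    apply finsum_mem_eq_sum_of_subset
    · rintro k ⟨hk1, hk2⟩
      simp only [Set.mem_Ici] at hk1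
      simp only [Function.mem_support] at hk2
      have hS : S (α * k - β) n ≠ 0 := by
        intro h0
        rw [h0] at hk2
        simp at hk2
      have hle : α * k - β ≤ n := OverAux.S_ne_zero (hd1 k hk1) hS
      have := hdk k hk1
      simp only [Finset.coe_Icc, Set.mem_Icc]
      omega
    · intro x hx
      simp at hx ⊢
      omega
  · rw [if_neg hn]
    have : n = 0 := by omega
    subst this
    simp
end

section
/- For every positive integer n, ∑_{k=1}^{n} S(k,n)·μ(k) = p̄(n−1), where μ is the Möbius function. Equivalently, the overpartition function satisfies p̄(n) = ∑_{k=1}^{n+1} S(k,n+1)·μ(k) for every nonnegative integer n. -/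
lemma Overpartition.ext' {n : ℕ} {a b : Overpartition n}
    (h1 : a.overlined = b.overlined) (h2 : a.nonoverlined = b.nonoverlined) : a = b := by
  cases a; cases b; simp_all

noncomputable instance (n : ℕ) : Fintype (Overpartition n) := Fintype.ofFinite _

def Overpartition.remove (k j : ℕ) (hk : 0 < k) {n : ℕ} (o : Overpartition n)
    (h : j ≤ o.nonoverlined.count k) : Overpartition (n - j * k) where
  overlined := o.overlined
  nonoverlined := o.nonoverlined - Multiset.replicate j k
  overlined_nodup := o.overlined_nodup
  overlined_pos := o.overlined_pos
  nonoverlined_pos := fun i hi => o.nonoverlined_pos i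
    (Multiset.mem_of_le (tsub_le_self) hi)
  parts_sum := by
    have hle : Multiset.replicate j k ≤ o.nonoverlined :=
      Multiset.le_count_iff_replicate_le.1 h
    have h2 : (o.nonoverlined - Multiset.replicate j k) + Multiset.replicate j k
        = o.nonoverlined := tsub_add_cancel_of_le hle
    have h3 := congrArg Multiset.sum h2
    rw [Multiset.sum_add, Multiset.sum_replicate, smul_eq_mul] at h3
    have h4 := o.parts_sum
    omega

def Overpartition.addj (k j n : ℕ) (hk : 0 < k) (o : Overpartition (n - j * k))
    (h : j * k ≤ n) : Overpartition n where
  overlined := o.overlined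
  nonoverlined := o.nonoverlined + Multiset.replicate j k
  overlined_nodup := o.overlined_nodup
  overlined_pos := o.overlined_pos
  nonoverlined_pos := by
    intro i hi
    rcases Multiset.mem_add.1 hi with h' | h'
    · exact o.nonoverlined_pos i h'
    · rw [Multiset.eq_of_mem_replicate h']; exact hk
  parts_sum := by
    have h4 := o.parts_sum
    rw [Multiset.sum_add, Multiset.sum_replicate, smul_eq_mul]
    omega

def opEquiv (k n : ℕ) (hk : 0 < k) :
    (Σ o : Overpartition n, {j // j ∈ Finset.Icc 1 (o.nonoverlined.count k)}) ≃
      (Σ j : {j // j ∈ Finset.Icc 1 (n / k)}, Overpartition (n - j.1 * k)) where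
  toFun := fun ⟨o, j, hj⟩ =>
    ⟨⟨j, by
      rw [Finset.mem_Icc] at hj ⊢
      refine ⟨hj.1, Nat.le_div_iff_mul_le hk |>.2 ?_⟩
      have hle : Multiset.replicate j k ≤ o.nonoverlined :=
        Multiset.le_count_iff_replicate_le.1 hj.2
      obtain ⟨u, hu⟩ := Multiset.le_iff_exists_add.1 hle
      have h3 := congrArg Multiset.sum hu
      rw [Multiset.sum_add, Multiset.sum_replicate, smul_eq_mul] at h3
      have h4 := o.parts_sum
      omega⟩,
     o.remove k j hk (Finset.mem_Icc.1 hj).2⟩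
  invFun := fun ⟨⟨j, hj⟩, o⟩ =>
    ⟨o.addj k j n hk (by
        rw [Finset.mem_Icc] at hj
        exact (Nat.le_div_iff_mul_le hk).1 hj.2),
     ⟨j, by
      rw [Finset.mem_Icc] at hj ⊢
      refine ⟨hj.1, ?_⟩
      show j ≤ Multiset.count k (o.nonoverlined + Multiset.replicate j k)
      rw [Multiset.count_add, Multiset.count_replicate_self]
      omega⟩⟩
  left_inv := by
    rintro ⟨o, j, hj⟩
    have hc : j ≤ o.nonoverlined.count k := (Finset.mem_Icc.1 hj).2
    have hle : Multiset.replicate j k ≤ o.nonoverlined :=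
      Multiset.le_count_iff_replicate_le.1 hc
    have hjk : j * k ≤ n := by
      obtain ⟨u, hu⟩ := Multiset.le_iff_exists_add.1 hle
      have h3 := congrArg Multiset.sum hu
      rw [Multiset.sum_add, Multiset.sum_replicate, smul_eq_mul] at h3
      have h4 := o.parts_sum
      omega
    have h : Overpartition.addj k j n hk (o.remove k j hk hc) hjk = o :=
      Overpartition.ext' rfl (tsub_add_cancel_of_le hle)
    have key : ∀ (X : Overpartition n) (_ : X = o)
        (p : j ∈ Finset.Icc 1 (X.nonoverlined.count k)),
        (⟨X, ⟨j, p⟩⟩ : Σ o : Overpartition n,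
          {j // j ∈ Finset.Icc 1 (o.nonoverlined.count k)}) = ⟨o, ⟨j, hj⟩⟩ := by
      rintro X rfl p; rfl
    exact key _ h _
  right_inv := by
    rintro ⟨⟨j, hj⟩, o⟩
    have hjk : j * k ≤ n := by
      rw [Finset.mem_Icc] at hj
      exact (Nat.le_div_iff_mul_le hk).1 hj.2
    have hc : j ≤ (Overpartition.addj k j n hk o hjk).nonoverlined.count k := by
      show j ≤ Multiset.count k (o.nonoverlined + Multiset.replicate j k)
      rw [Multiset.count_add, Multiset.count_replicate_self]
      omega
    have h : (Overpartition.addj k j n hk o hjk).remove k j hk hc = o :=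
      Overpartition.ext' rfl (add_tsub_cancel_right _ _)
    exact Sigma.ext rfl (heq_of_eq h)

lemma S_eq (k n : ℕ) (hk : 0 < k) :
    S k n = ∑ j ∈ Finset.Icc 1 (n / k), pbar (n - j * k) := by
  classical
  have hL : Nat.card (Σ o : Overpartition n,
      {j // j ∈ Finset.Icc 1 (o.nonoverlined.count k)}) = S k n := by
    rw [Nat.card_eq_fintype_card, Fintype.card_sigma, S, finsum_eq_sum_of_fintype]
    refine Finset.sum_congr rfl fun o _ => ?_
    rw [Fintype.card_coe, Nat.card_Icc]
    omega
  have hR : Nat.card (Σ j : {j // j ∈ Finset.Icc 1 (n / k)},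
      Overpartition (n - j.1 * k)) = ∑ j ∈ Finset.Icc 1 (n / k), pbar (n - j * k) := by
    rw [Nat.card_eq_fintype_card, Fintype.card_sigma,
      ← Finset.sum_coe_sort (Finset.Icc 1 (n / k)) (fun j => pbar (n - j * k))]
    refine Finset.sum_congr rfl fun j _ => ?_
    rw [pbar, Nat.card_eq_fintype_card]
  rw [← hL, ← hR]
  exact Nat.card_congr (opEquiv k n hk)

open ArithmeticFunction in
lemma main_identity (n : ℕ) (hn : 0 < n) :
    ∑ k ∈ Finset.Icc 1 n, (S k n : ℤ) * moebius k = (pbar (n - 1) : ℤ) := by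
  have hmu : ∀ m : ℕ, ∑ d ∈ m.divisors, (moebius d : ℤ) = if m = 1 then 1 else 0 := by
    intro m
    have h : ((moebius * ↑zeta : ArithmeticFunction ℤ)) m = (1 : ArithmeticFunction ℤ) m := by
      rw [moebius_mul_coe_zeta]
    rw [coe_mul_zeta_apply, one_apply] at h
    exact h
  calc ∑ k ∈ Finset.Icc 1 n, (S k n : ℤ) * moebius k
      = ∑ k ∈ Finset.Icc 1 n, ∑ j ∈ Finset.Icc 1 (n / k),
          (pbar (n - j * k) : ℤ) * moebius k := by
        refine Finset.sum_congr rfl fun k hk => ?_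
        rw [S_eq k n (Finset.mem_Icc.1 hk).1]
        push_cast
        rw [Finset.sum_mul]
    _ = ∑ m ∈ Finset.Icc 1 n, ∑ d ∈ m.divisors, (pbar (n - m) : ℤ) * moebius d := by
        rw [Finset.sum_sigma', Finset.sum_sigma']
        refine Finset.sum_nbij' (fun p => ⟨p.2 * p.1, p.1⟩) (fun p => ⟨p.2, p.1 / p.2⟩)
          ?_ ?_ ?_ ?_ ?_
        · rintro ⟨k, j⟩ hp
          simp only [Finset.mem_sigma, Finset.mem_Icc, Nat.mem_divisors] at hp ⊢
          obtain ⟨⟨hk1, hkn⟩, hj1, hjk⟩ := hp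
          have hjkn : j * k ≤ n := (Nat.le_div_iff_mul_le (by omega)).1 hjk
          have hpos : 0 < j * k := by positivity
          exact ⟨⟨hpos, hjkn⟩, ⟨⟨j, mul_comm j k⟩, by omega⟩⟩
        · rintro ⟨m, d⟩ hp
          simp only [Finset.mem_sigma, Finset.mem_Icc, Nat.mem_divisors] at hp ⊢
          obtain ⟨⟨hm1, hmn⟩, hdm, hm0⟩ := hp
          have hd0 : 0 < d := Nat.pos_of_dvd_of_pos hdm (by omega)
          have hdlem : d ≤ m := Nat.le_of_dvd (by omega) hdm
          refine ⟨⟨hd0, le_trans hdlem hmn⟩, ?_, Nat.div_le_div_right hmn⟩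
          exact Nat.one_le_div_iff hd0 |>.2 hdlem
        · rintro ⟨k, j⟩ hp
          simp only [Finset.mem_sigma, Finset.mem_Icc] at hp
          have hk0 : 0 < k := hp.1.1
          simp [Nat.mul_div_cancel _ hk0]
        · rintro ⟨m, d⟩ hp
          simp only [Finset.mem_sigma, Finset.mem_Icc, Nat.mem_divisors] at hp
          have := Nat.div_mul_cancel hp.2.1
          simp [this]
        · rintro ⟨k, j⟩ _
          rfl
    _ = ∑ m ∈ Finset.Icc 1 n, (pbar (n - m) : ℤ) *
          ∑ d ∈ m.divisors, (moebius d : ℤ) := by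
        refine Finset.sum_congr rfl fun m _ => ?_
        rw [Finset.mul_sum]
    _ = (pbar (n - 1) : ℤ) := by
        rw [Finset.sum_eq_single 1]
        · rw [hmu 1]; simp
        · intro b _ hb
          rw [hmu b]
          simp [hb]
        · intro h
          exact absurd (Finset.mem_Icc.2 ⟨le_refl 1, hn⟩) h

open ArithmeticFunction in
theorem stmt6 :
    (∀ n : ℕ, 0 < n →
      ∑ k ∈ Finset.Icc 1 n, (S k n : ℤ) * moebius k = (pbar (n - 1) : ℤ)) ∧
    (∀ n : ℕ,
      (pbar n : ℤ) = ∑ k ∈ Finset.Icc 1 (n + 1), (S k (n + 1) : ℤ) * moebius k) := by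
  constructor
  · exact main_identity
  · intro n
    have h := main_identity (n + 1) (by omega)
    simpa using h.symm
end
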